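/- Let α = 1/2, let ℓ ≥ 1 be a natural number and let t > 0 satisfy t · λ_ℓ² > 1. Then σ²_{ℓ,t,1/2} ≤ λ_ℓ^{-2} · (1 + (Γ(3/2))² · log(λ_ℓ² t)). -/

import Mathlib

open scoped BigOperators
open MeasureTheory Real

/-- The two-parameter Mittag-Leffler function `E_{a,b}(x) = ∑_{k=0}^∞ x^k / Γ(a k + b)`. -/
noncomputable def mittagLeffler (a b x : ℝ) : ℝ :=
  ∑' k : ℕ, x ^ k / Real.Gamma (a * (k : ℝ) + b)

/-- Eigenvalues of the negative Laplace–Beltrami operator on the sphere: `λ_ℓ = ℓ(ℓ+1)`. -/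
noncomputable def lam (l : ℕ) : ℝ := (l : ℝ) * ((l : ℝ) + 1)

/-- `σ²_{ℓ,t,α} = ∫₀ᵗ (E_α(−λ_ℓ r^α))² dr`. -/
noncomputable def sigmaSq (l : ℕ) (t a : ℝ) : ℝ :=
  ∫ r in (0:ℝ)..t, (mittagLeffler a 1 (-(lam l) * r ^ a)) ^ 2

open Set

namespace MLaux

/-- The Laplace-type integral `∫_0^∞ e^{-u² - 2ux} du`, which equals
`(√π/2) E_{1/2}(-x)` for `x ≥ 0`. -/
noncomputable def mlInt (x : ℝ) : ℝ := ∫ u in Set.Ioi (0:ℝ), Real.exp (-u^2 - 2*u*x)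

lemma integrable_kernel (x : ℝ) :
    IntegrableOn (fun u : ℝ => Real.exp (-u^2 - 2*u*x)) (Set.Ioi 0) := by
  have h0 : Integrable (fun u : ℝ => Real.exp (-1 * u ^ 2)) := integrable_exp_neg_mul_sq one_pos
  have h1 : Integrable (fun u : ℝ => Real.exp (-1 * (u + x) ^ 2)) := h0.comp_add_right x
  have h2 := h1.const_mul (Real.exp (x ^ 2))
  have h3 : (fun u : ℝ => Real.exp (x ^ 2) * Real.exp (-1 * (u + x) ^ 2))
      = fun u : ℝ => Real.exp (-u ^ 2 - 2 * u * x) := by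
    funext u; rw [← Real.exp_add]; congr 1; ring
  rw [h3] at h2
  exact h2.integrableOn

lemma mlInt_anti : Antitone mlInt := by
  intro x y hxy
  refine setIntegral_mono_on (integrable_kernel y) (integrable_kernel x) measurableSet_Ioi ?_
  intro u hu
  have hu' : (0:ℝ) < u := hu
  exact Real.exp_le_exp.2 (by nlinarith)

lemma mlInt_nonneg (x : ℝ) : 0 ≤ mlInt x :=
  setIntegral_nonneg measurableSet_Ioi (fun u _ => (Real.exp_pos _).le)

lemma mlInt_le {x : ℝ} (hx : 0 ≤ x) : mlInt x ≤ Real.sqrt π / 2 := by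
  have h0 : mlInt 0 = Real.sqrt π / 2 := by
    unfold mlInt
    rw [show (fun u : ℝ => Real.exp (-u^2 - 2*u*0)) = fun u : ℝ => Real.exp (-1 * u^2) by
      funext u; congr 1; ring]
    rw [integral_gaussian_Ioi 1]
    norm_num
  calc mlInt x ≤ mlInt 0 := mlInt_anti hx
  _ = Real.sqrt π / 2 := h0

lemma mlInt_le' {x : ℝ} (hx : 0 < x) : mlInt x ≤ 1 / (2*x) := by
  have h2x : (0:ℝ) < 2*x := by linarith
  have hint : IntegrableOn (fun u : ℝ => Real.exp (-(2*x) * u)) (Ioi 0) :=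
    exp_neg_integrableOn_Ioi 0 h2x
  have hle : mlInt x ≤ ∫ u in Ioi (0:ℝ), Real.exp (-(2*x)*u) := by
    refine setIntegral_mono_on (integrable_kernel x) hint measurableSet_Ioi ?_
    intro u hu
    exact Real.exp_le_exp.2 (by nlinarith [sq_nonneg u])
  have hval : (∫ u in Ioi (0:ℝ), Real.exp (-(2*x)*u)) = 1/(2*x) := by
    have h := integral_exp_neg_mul_rpow one_pos h2x
    simp_rw [Real.rpow_one] at h
    rw [h]
    norm_num [Real.Gamma_two, Real.rpow_neg_one]
  linarith

lemma gamma_ge (m : ℕ) : ((m.factorial : ℝ)) / 2 ≤ Real.Gamma ((m:ℝ) + 3/2) := by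
  induction m with
  | zero =>
    simp only [Nat.cast_zero, zero_add, Nat.factorial_zero, Nat.cast_one]
    rw [show (3/2 : ℝ) = 1/2 + 1 by norm_num, Real.Gamma_add_one (by norm_num),
      Real.Gamma_one_half_eq]
    nlinarith [Real.sq_sqrt Real.pi_pos.le, Real.sqrt_nonneg π, Real.pi_gt_three]
  | succ n ih =>
    have h : ((n:ℝ)+1) + 3/2 = ((n:ℝ) + 3/2) + 1 := by ring
    rw [Nat.cast_succ, h, Real.Gamma_add_one (by positivity)]
    have hn : (0:ℝ) ≤ n.factorial := by positivity
    have hΓ : (0:ℝ) < Real.Gamma ((n:ℝ) + 3/2) := Real.Gamma_pos_of_pos (by positivity)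
    calc (((n+1).factorial : ℕ) : ℝ)/2 = ((n:ℝ)+1) * ((n.factorial : ℝ)/2) := by
          push_cast [Nat.factorial_succ]; ring
    _ ≤ ((n:ℝ)+3/2) * Real.Gamma ((n:ℝ)+3/2) := by
          apply mul_le_mul (by linarith) ih (by positivity) (by positivity)

lemma summable_ml {x : ℝ} (hx : 0 ≤ x) :
    Summable (fun k : ℕ => x ^ k / Real.Gamma ((k:ℝ)/2 + 1)) := by
  apply Summable.even_add_odd
  · have he : (fun m : ℕ => x ^ (2*m) / Real.Gamma (((2*m : ℕ) : ℝ)/2 + 1))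
        = fun m : ℕ => (x^2)^m / (m.factorial : ℝ) := by
      funext m
      have h : (((2*m : ℕ)) : ℝ)/2 + 1 = (m:ℝ) + 1 := by push_cast; ring
      rw [h, Real.Gamma_nat_eq_factorial, pow_mul]
    rw [he]
    exact Real.summable_pow_div_factorial (x^2)
  · refine Summable.of_nonneg_of_le (fun m => by positivity) (fun m => ?_)
      ((Real.summable_pow_div_factorial (x^2)).mul_left (2*x))
    have hg : (((2*m+1 : ℕ)) : ℝ)/2 + 1 = (m:ℝ) + 3/2 := by push_cast; ring
    rw [hg]
    have hΓ : (0:ℝ) < Real.Gamma ((m:ℝ) + 3/2) := Real.Gamma_pos_of_pos (by positivity)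
    have hfac : (0:ℝ) < (m.factorial : ℝ)/2 := by positivity
    calc x^(2*m+1) / Real.Gamma ((m:ℝ)+3/2)
        ≤ x^(2*m+1) / ((m.factorial : ℝ)/2) := by
          gcongr
          · exact gamma_ge m
    _ = 2*x * ((x^2)^m / (m.factorial : ℝ)) := by
          rw [pow_succ, pow_mul]
          field_simp

/-- Legendre duplication at half-integers. -/
lemma dup (k : ℕ) : Real.Gamma (((k:ℝ)+1)/2) * Real.Gamma ((k:ℝ)/2 + 1)
    = (k.factorial : ℝ) * (2:ℝ) ^ (-(k:ℝ)) * Real.sqrt π := by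
  have h := Real.Gamma_mul_Gamma_add_half (((k:ℝ)+1)/2)
  rw [show ((k:ℝ)+1)/2 + 1/2 = (k:ℝ)/2 + 1 by ring] at h
  rw [show 2 * (((k:ℝ)+1)/2) = (k:ℝ)+1 by ring] at h
  rw [Real.Gamma_nat_eq_factorial] at h
  rw [show 1 - ((k:ℝ)+1) = -(k:ℝ) by ring] at h
  exact h

lemma term_eq (x : ℝ) (k : ℕ) :
    (2 / Real.sqrt π) * ((-(2*x))^k / (k.factorial : ℝ) * (Real.Gamma (((k:ℝ)+1)/2)/2))
      = (-x)^k / Real.Gamma ((k:ℝ)/2 + 1) := by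
  have hd := dup k
  have h1 : (0:ℝ) < Real.Gamma ((k:ℝ)/2+1) := Real.Gamma_pos_of_pos (by positivity)
  have h2 : (0:ℝ) < Real.sqrt π := Real.sqrt_pos.2 Real.pi_pos
  have h3 : (0:ℝ) < (k.factorial : ℝ) := by exact_mod_cast k.factorial_pos
  have hΓ : Real.Gamma (((k:ℝ)+1)/2)
      = (k.factorial : ℝ) * (2:ℝ)^(-(k:ℝ)) * Real.sqrt π / Real.Gamma ((k:ℝ)/2+1) := by
    rw [eq_div_iff h1.ne']; exact hd
  have h4 : (-(2*x))^k = 2^k * (-x)^k := by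
    rw [show -(2*x) = 2 * (-x) by ring, mul_pow]
  have h5 : (2:ℝ)^k * (2:ℝ)^(-(k:ℝ)) = 1 := by
    rw [← Real.rpow_natCast 2 k, ← Real.rpow_add two_pos]; simp
  rw [hΓ, h4]
  field_simp
  linear_combination ((-x)^k) * h5

lemma moment (k : ℕ) :
    ∫ u in Ioi (0:ℝ), u ^ k * Real.exp (-u ^ 2) = Real.Gamma (((k:ℝ) + 1) / 2) / 2 := by
  have hk : (-1:ℝ) < (k:ℝ) := lt_of_lt_of_le neg_one_lt_zero (Nat.cast_nonneg k)
  have h := integral_rpow_mul_exp_neg_mul_rpow two_pos hk one_pos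
  have e : (∫ u in Ioi (0:ℝ), u ^ ((k:ℝ)) * Real.exp (-1 * u ^ (2:ℝ)))
      = ∫ u in Ioi (0:ℝ), u ^ k * Real.exp (-u ^ 2) := by
    refine setIntegral_congr_fun measurableSet_Ioi fun u hu => ?_
    rw [Real.rpow_natCast, show ((2:ℝ)) = ((2:ℕ):ℝ) by norm_num, Real.rpow_natCast,
      neg_one_mul]
  rw [e] at h
  rw [h, Real.one_rpow]
  ring

lemma int_pow_exp (k : ℕ) :
    IntegrableOn (fun u : ℝ => u ^ k * Real.exp (-u^2)) (Ioi 0) := by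
  have hk : (-1:ℝ) < (k:ℝ) := lt_of_lt_of_le neg_one_lt_zero (Nat.cast_nonneg k)
  have h := integrableOn_rpow_mul_exp_neg_mul_sq one_pos hk
  refine h.congr_fun (fun u hu => ?_) measurableSet_Ioi
  simp only [Real.rpow_natCast, neg_one_mul]

/-- For `x ≥ 0`, `E_{1/2}(-x) = (2/√π) ∫_0^∞ e^{-u²-2ux} du`. -/
lemma ml_eq {x : ℝ} (hx : 0 ≤ x) :
    mittagLeffler (1/2) 1 (-x) = (2 / Real.sqrt π) * mlInt x := by
  set F : ℕ → ℝ → ℝ := fun k u => Real.exp (-u^2) * ((-(2*x)*u) ^ k / (k.factorial : ℝ))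
    with hF
  have hFrw : ∀ k : ℕ, F k = fun u : ℝ =>
      ((-(2*x))^k / (k.factorial : ℝ)) * (u^k * Real.exp (-u^2)) := by
    intro k; funext u; rw [hF]; dsimp only; rw [mul_pow]; ring
  have hFint : ∀ k, Integrable (F k) (volume.restrict (Ioi 0)) := by
    intro k
    rw [hFrw k]
    exact (int_pow_exp k).const_mul _
  have hnorm : ∀ k, (∫ u in Ioi (0:ℝ), ‖F k u‖)
      = (2*x)^k / (k.factorial : ℝ) * (Real.Gamma (((k:ℝ)+1)/2) / 2) := by
    intro k
    have e : ∀ u ∈ Ioi (0:ℝ), ‖F k u‖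
        = (2*x)^k / (k.factorial : ℝ) * (u^k * Real.exp (-u^2)) := by
      intro u hu
      have hu' : (0:ℝ) < u := hu
      rw [hF]; dsimp only
      rw [Real.norm_eq_abs, abs_mul, abs_of_pos (Real.exp_pos _), abs_div, abs_pow,
        abs_mul, abs_neg, Nat.abs_cast, abs_of_nonneg (by positivity : (0:ℝ) ≤ 2*x),
        abs_of_pos hu', mul_pow]
      ring
    rw [setIntegral_congr_fun measurableSet_Ioi e, MeasureTheory.integral_const_mul, moment k]
  have hsum : Summable (fun k => ∫ u in Ioi (0:ℝ), ‖F k u‖) := by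
    simp_rw [hnorm]
    have key : ∀ k : ℕ, (2*x)^k / (k.factorial : ℝ) * (Real.Gamma (((k:ℝ)+1)/2)/2)
        = Real.sqrt π / 2 * (x^k / Real.Gamma ((k:ℝ)/2+1)) := by
      intro k
      have h := term_eq x k
      have h2 : (0:ℝ) < Real.sqrt π := Real.sqrt_pos.2 Real.pi_pos
      have h4 : (-(2*x))^k = (-1:ℝ)^k * (2*x)^k := by
        rw [show -(2*x) = (-1) * (2*x) by ring, mul_pow]
      have h4' : (-x)^k = (-1:ℝ)^k * x^k := by
        rw [show -x = (-1:ℝ) * x by ring, mul_pow]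
      rw [h4, h4'] at h
      rcases Nat.even_or_odd k with hk | hk
      · rw [hk.neg_one_pow] at h; field_simp at h ⊢; linarith [h]
      · rw [hk.neg_one_pow] at h; field_simp at h ⊢; linarith [h]
    simp_rw [key]
    exact (summable_ml hx).mul_left _
  have hswap := MeasureTheory.integral_tsum_of_summable_integral_norm hFint hsum
  have hpt : ∀ u : ℝ, (∑' k, F k u) = Real.exp (-u^2 - 2*u*x) := by
    intro u
    rw [hF]; dsimp only
    rw [tsum_mul_left]
    have he : (∑' k : ℕ, (-(2*x)*u)^k / ((k.factorial : ℕ) : ℝ)) = Real.exp (-(2*x)*u) := by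
      rw [Real.exp_eq_exp_ℝ, NormedSpace.exp_eq_tsum_div]
    rw [he, ← Real.exp_add]
    congr 1; ring
  have hml : mlInt x = ∫ u in Ioi (0:ℝ), (∑' k, F k u) := by
    unfold mlInt
    exact (setIntegral_congr_fun measurableSet_Ioi fun u _ => (hpt u).symm)
  unfold mittagLeffler
  rw [hml, ← hswap, ← tsum_mul_left]
  apply tsum_congr
  intro k
  have hI : (∫ u in Ioi (0:ℝ), F k u)
      = (-(2*x))^k / (k.factorial : ℝ) * (Real.Gamma (((k:ℝ)+1)/2)/2) := by
    rw [hFrw k, MeasureTheory.integral_const_mul, moment k]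
  rw [hI, term_eq x k, show (1/2 : ℝ) * (k:ℝ) + 1 = (k:ℝ)/2 + 1 by ring]

end MLaux

open MLaux

/-- For `α = 1/2`, `ℓ ≥ 1` and `t > 0` with `t λ_ℓ² > 1`:
`σ²_{ℓ,t,1/2} ≤ λ_ℓ^{-2} (1 + Γ(3/2)² log(λ_ℓ² t))`. -/
theorem sigmaSq_bound_critical_alpha (l : ℕ) (hl : 1 ≤ l) (t : ℝ) (ht : 0 < t)
    (ht' : 1 < t * lam l ^ 2) :
    sigmaSq l t (1/2) ≤ lam l ^ (-2 : ℝ) *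
      (1 + (Real.Gamma (3/2)) ^ 2 * Real.log (lam l ^ 2 * t)) := by
  have hl1 : (1:ℝ) ≤ (l:ℝ) := by exact_mod_cast hl
  have hlam0 : (0:ℝ) < lam l := by unfold lam; nlinarith
  set lm := lam l with hlm
  have hlm2 : (0:ℝ) < lm^2 := by positivity
  have hsqpi : (0:ℝ) < Real.sqrt π := Real.sqrt_pos.2 Real.pi_pos
  set G : ℝ → ℝ := fun r => (2 / Real.sqrt π) * mlInt (lm * r ^ (1/2 : ℝ)) with hG
  have hGnonneg : ∀ r, 0 ≤ G r := fun r => mul_nonneg (by positivity) (mlInt_nonneg _)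
  have hGle1 : ∀ r : ℝ, 0 ≤ r → G r ≤ 1 := by
    intro r hr
    have hx : 0 ≤ lm * r ^ (1/2:ℝ) := mul_nonneg hlam0.le (Real.rpow_nonneg hr _)
    calc G r ≤ (2/Real.sqrt π) * (Real.sqrt π / 2) :=
      mul_le_mul_of_nonneg_left (mlInt_le hx) (by positivity)
    _ = 1 := by field_simp
  have hGle2 : ∀ r : ℝ, 0 < r → (G r)^2 ≤ 1 / (π * lm^2) * r⁻¹ := by
    intro r hr
    have hx : 0 < lm * r ^ (1/2:ℝ) := by positivity
    have h1 : G r ≤ 1 / (Real.sqrt π * (lm * r ^ (1/2:ℝ))) := by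
      calc G r ≤ (2/Real.sqrt π) * (1/(2*(lm * r^(1/2:ℝ)))) :=
        mul_le_mul_of_nonneg_left (mlInt_le' hx) (by positivity)
      _ = 1/(Real.sqrt π * (lm * r^(1/2:ℝ))) := by
          field_simp
    have h2 : (G r)^2 ≤ (1/(Real.sqrt π * (lm * r^(1/2:ℝ))))^2 :=
      pow_le_pow_left₀ (hGnonneg r) h1 2
    have h3 : (1/(Real.sqrt π * (lm * r^(1/2:ℝ))))^2 = 1 / (π * lm^2) * r⁻¹ := by
      rw [div_pow, one_pow, mul_pow, mul_pow, Real.sq_sqrt Real.pi_pos.le,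
        ← Real.rpow_natCast (r ^ (1/2:ℝ)) 2, ← Real.rpow_mul hr.le]
      norm_num
      field_simp
    linarith [h2, h3.le, h3.ge]
  have hGmeas : Measurable G := by
    have h1 : Measurable fun r : ℝ => lm * r ^ (1/2:ℝ) :=
      ((Real.continuous_rpow_const (by norm_num)).measurable).const_mul lm
    exact (mlInt_anti.measurable.comp h1).const_mul _
  have hGint : ∀ a b : ℝ, 0 ≤ a → a ≤ b →
      IntervalIntegrable (fun r => (G r)^2) volume a b := by
    intro a b ha hab
    rw [intervalIntegrable_iff_integrableOn_Ioc_of_le hab]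
    refine Integrable.mono' (g := fun _ => (1:ℝ))
      (integrableOn_const measure_Ioc_lt_top.ne)
      ((hGmeas.pow_const 2).aestronglyMeasurable) ?_
    refine (ae_restrict_iff' measurableSet_Ioc).2 (Filter.Eventually.of_forall fun r hr => ?_)
    rw [Real.norm_eq_abs, abs_of_nonneg (by positivity)]
    exact pow_le_one₀ (hGnonneg r) (hGle1 r (le_trans ha hr.1.le))
  set s : ℝ := lm ^ (-2:ℝ) with hs
  have hs_eq : s = (lm^2)⁻¹ := by
    rw [hs, show (-2:ℝ) = -((2:ℕ):ℝ) by norm_num, Real.rpow_neg hlam0.le, Real.rpow_natCast]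
  have hspos : 0 < s := by rw [hs_eq]; positivity
  have hst : s ≤ t := by
    rw [hs_eq, show (lm^2)⁻¹ = 1/lm^2 by rw [one_div], div_le_iff₀ hlm2]
    linarith
  have hsplit : sigmaSq l t (1/2) = (∫ r in (0:ℝ)..s, (G r)^2) + ∫ r in s..t, (G r)^2 := by
    have h1 : sigmaSq l t (1/2) = ∫ r in (0:ℝ)..t, (G r)^2 := by
      unfold sigmaSq
      apply intervalIntegral.integral_congr
      intro r hr
      rw [Set.uIcc_of_le ht.le] at hr
      have hx : 0 ≤ lm * r ^ (1/2:ℝ) := mul_nonneg hlam0.le (Real.rpow_nonneg hr.1 _)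
      show mittagLeffler (1/2) 1 (-(lam l) * r ^ (1/2:ℝ)) ^ 2 = G r ^ 2
      rw [show -(lam l) * r^(1/2:ℝ) = -(lm * r^(1/2:ℝ)) by rw [← hlm]; ring,
        ml_eq hx]
    rw [h1, ← intervalIntegral.integral_add_adjacent_intervals
      (hGint 0 s le_rfl hspos.le) (hGint s t hspos.le hst)]
  have hb1 : (∫ r in (0:ℝ)..s, (G r)^2) ≤ s := by
    have h : (∫ r in (0:ℝ)..s, (G r)^2) ≤ ∫ _r in (0:ℝ)..s, (1:ℝ) := by
      apply intervalIntegral.integral_mono_on hspos.le (hGint 0 s le_rfl hspos.le)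
        intervalIntegrable_const
      intro r hr
      exact pow_le_one₀ (hGnonneg r) (hGle1 r hr.1)
    simpa using h
  have hlog : 0 ≤ Real.log (lm^2 * t) := Real.log_nonneg (by nlinarith)
  have hb2 : (∫ r in s..t, (G r)^2) ≤ 1/(π * lm^2) * Real.log (lm^2 * t) := by
    have hxint : IntervalIntegrable (fun r : ℝ => 1/(π*lm^2) * r⁻¹) volume s t := by
      apply ContinuousOn.intervalIntegrable
      apply ContinuousOn.mul continuousOn_const
      apply ContinuousOn.inv₀ continuousOn_id
      intro r hr
      rw [Set.uIcc_of_le hst] at hr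
      exact ne_of_gt (lt_of_lt_of_le hspos hr.1)
    have hmono : (∫ r in s..t, (G r)^2) ≤ ∫ r in s..t, 1/(π*lm^2) * r⁻¹ :=
      intervalIntegral.integral_mono_on hst (hGint s t hspos.le hst) hxint
        (fun r hr => hGle2 r (lt_of_lt_of_le hspos hr.1))
    have hval : (∫ r in s..t, 1/(π*lm^2) * r⁻¹) = 1/(π*lm^2) * Real.log (lm^2 * t) := by
      rw [intervalIntegral.integral_const_mul, integral_inv]
      · congr 1
        rw [hs_eq, div_eq_mul_inv, inv_inv, mul_comm]
      · rw [Set.uIcc_of_le hst]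
        intro h
        exact absurd h.1 (not_le.2 hspos)
    linarith
  have hΓ2 : (Real.Gamma (3/2 : ℝ))^2 = π/4 := by
    rw [show (3/2:ℝ) = 1/2 + 1 by norm_num, Real.Gamma_add_one (by norm_num),
      Real.Gamma_one_half_eq, mul_pow, Real.sq_sqrt Real.pi_pos.le]
    ring
  rw [hsplit, hΓ2]
  have key : 1/(π*lm^2) ≤ (lm^2)⁻¹ * (π/4) := by
    rw [div_le_iff₀ (show (0:ℝ) < π*lm^2 by positivity)]
    have h4 : (4:ℝ) ≤ π^2 := by nlinarith [Real.pi_gt_three]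
    have hinv : (lm^2)⁻¹ * lm^2 = 1 := inv_mul_cancel₀ hlm2.ne'
    nlinarith [hinv]
  have hkey2 := mul_le_mul_of_nonneg_right key hlog
  calc (∫ r in (0:ℝ)..s, (G r)^2) + (∫ r in s..t, (G r)^2)
      ≤ s + (lm^2)⁻¹ * (π/4) * Real.log (lm^2*t) := by linarith
  _ = s * (1 + π/4 * Real.log (lm^2*t)) := by rw [hs_eq]; ring
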